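/- A feasible allocation (x, y, Z) maximizes social welfare Π(x, y, Z) = ∑_{i=1}^N [f(x_i + d_i) − κ·x_i − δ·d_i − σ·u_i] over all feasible allocations if and only if ∑_{i=1}^N x_i = x̂_β and x_i = y_i = z_{ji} for every j ≠ i and every i ∈ {1,…,N}; moreover, the maximum value of Π equals N·f*(β). -/

import Mathlib

open Filter Finset

/-- The benefit function `f` with its first and second derivatives, together with
the maximizer map `α ↦ x̂_α` (the unique `x ≥ 0` with `f'(x̂_α) = α` for `α ∈ (0, f'(0)]`). -/
structure BenefitFun where
  f : ℝ → ℝ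
  f' : ℝ → ℝ
  f'' : ℝ → ℝ
  xhat : ℝ → ℝ
  f_zero : f 0 = 0
  f_nonneg : ∀ x : ℝ, 0 ≤ x → 0 ≤ f x
  hasDeriv : ∀ x ∈ Set.Ici (0:ℝ), HasDerivWithinAt f (f' x) (Set.Ici 0) x
  hasDeriv' : ∀ x ∈ Set.Ici (0:ℝ), HasDerivWithinAt f' (f'' x) (Set.Ici 0) x
  cont_f'' : ContinuousOn f'' (Set.Ici 0)
  f'_pos : ∀ x : ℝ, 0 < x → 0 < f' x
  f''_neg : ∀ x : ℝ, 0 < x → f'' x < 0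
  f'_tendsto : Filter.Tendsto f' Filter.atTop (nhds 0)
  xhat_nonneg : ∀ α : ℝ, 0 < α → α ≤ f' 0 → 0 ≤ xhat α
  xhat_spec : ∀ α : ℝ, 0 < α → α ≤ f' 0 → f' (xhat α) = α
  xhat_unique : ∀ α : ℝ, 0 < α → α ≤ f' 0 → ∀ x : ℝ, 0 ≤ x → f' x = α → x = xhat α
  xhat_max : ∀ α : ℝ, 0 < α → α ≤ f' 0 → ∀ x : ℝ, 0 ≤ x → f x - α * x ≤ f (xhat α) - α * xhat α

/-- `f*(α) = f(x̂_α) − α·x̂_α = sup_{x ≥ 0} (f(x) − α x)`. -/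
noncomputable def BenefitFun.fstar (B : BenefitFun) (α : ℝ) : ℝ :=
  B.f (B.xhat α) - α * B.xhat α

/-- `β̃(n) = (1/n)·κ + ((n−1)/n)·(δ+σ)`. -/
noncomputable def btilde (κ δ σ : ℝ) (n : ℕ) : ℝ :=
  (1 / (n:ℝ)) * κ + (((n:ℝ) - 1) / (n:ℝ)) * (δ + σ)

/-- Feasibility of an allocation `(x, y, Z)`. -/
def Feasible {N : ℕ} (x y : Fin N → ℝ) (Z : Fin N → Fin N → ℝ) : Prop :=
  ∀ i, 0 ≤ x i ∧ 0 ≤ y i ∧ y i ≤ x i ∧ Z i i = 0 ∧ ∀ j, j ≠ i → 0 ≤ Z i j ∧ Z i j ≤ y j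

/-- Social welfare `Π(x, y, Z) = ∑ᵢ (f(xᵢ + dᵢ) − κ xᵢ − δ dᵢ − σ uᵢ)`. -/
noncomputable def SW (B : BenefitFun) (κ δ σ : ℝ) {N : ℕ} (x : Fin N → ℝ)
    (Z : Fin N → Fin N → ℝ) : ℝ :=
  ∑ i, (B.f (x i + ∑ j, Z i j) - κ * x i - δ * (∑ j, Z i j) - σ * (∑ j, Z j i))

lemma aux_strict (B : BenefitFun) (β : ℝ) (hβpos : 0 < β) (hβlt : β < B.f' 0) :
    ∀ c : ℝ, 0 ≤ c → c ≠ B.xhat β → B.f c - β * c < B.f (B.xhat β) - β * B.xhat β := by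
  have hβle : β ≤ B.f' 0 := hβlt.le
  have hw0 : 0 ≤ B.xhat β := B.xhat_nonneg β hβpos hβle
  have hspec : B.f' (B.xhat β) = β := B.xhat_spec β hβpos hβle
  have hcontf : ContinuousOn B.f (Set.Ici 0) := fun z hz => (B.hasDeriv z hz).continuousWithinAt
  have hcontf' : ContinuousOn B.f' (Set.Ici 0) := fun z hz => (B.hasDeriv' z hz).continuousWithinAt
  have hanti : StrictAntiOn B.f' (Set.Ici 0) := by
    apply strictAntiOn_of_deriv_neg (convex_Ici 0) hcontf'
    intro z hz
    rw [interior_Ici] at hz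
    rw [((B.hasDeriv' z (Set.mem_Ici.mpr (le_of_lt hz))).hasDerivAt (Ici_mem_nhds hz)).deriv]
    exact B.f''_neg z hz
  have hwpos : 0 < B.xhat β := by
    rcases hw0.lt_or_eq with h | h
    · exact h
    · exfalso; rw [← h] at hspec; exact (ne_of_gt hβlt) hspec
  set g := fun c : ℝ => B.f c - β * c with hg
  have hgderiv : ∀ z : ℝ, 0 < z → HasDerivAt g (B.f' z - β) z := by
    intro z hz
    have h1 : HasDerivAt B.f (B.f' z) z := (B.hasDeriv z hz.le).hasDerivAt (Ici_mem_nhds hz)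
    exact (h1.sub ((hasDerivAt_id z).const_mul β)).congr_deriv (by ring)
  have hgcont : ContinuousOn g (Set.Ici 0) :=
    hcontf.sub (continuous_const.mul continuous_id).continuousOn
  intro c hc hne
  rcases lt_or_gt_of_ne hne with hlt | hgt
  · have hmono : StrictMonoOn g (Set.Icc 0 (B.xhat β)) := by
      apply strictMonoOn_of_deriv_pos (convex_Icc 0 (B.xhat β)) (hgcont.mono Set.Icc_subset_Ici_self)
      intro z hz
      rw [interior_Icc] at hz
      rw [(hgderiv z hz.1).deriv]
      have hlt2 : β < B.f' z := by
        rw [← hspec]; exact hanti (Set.mem_Ici.mpr hz.1.le) (Set.mem_Ici.mpr hw0) hz.2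
      linarith
    exact hmono (Set.mem_Icc.mpr ⟨hc, hlt.le⟩) (Set.mem_Icc.mpr ⟨hw0, le_refl _⟩) hlt
  · have hanti2 : StrictAntiOn g (Set.Ici (B.xhat β)) := by
      apply strictAntiOn_of_deriv_neg (convex_Ici (B.xhat β)) (hgcont.mono (Set.Ici_subset_Ici.mpr hw0))
      intro z hz
      rw [interior_Ici] at hz
      rw [(hgderiv z (hwpos.trans hz)).deriv]
      have hlt2 : B.f' z < β := by
        rw [← hspec]; exact hanti (Set.mem_Ici.mpr hw0) (Set.mem_Ici.mpr (hwpos.trans hz).le) hz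
      linarith
    exact hanti2 (Set.mem_Ici.mpr le_rfl) (Set.mem_Ici.mpr hgt.le) hgt

theorem stmt0 (B : BenefitFun) (N : ℕ) (hN : 2 ≤ N)
    (κ δ σ : ℝ) (hκ : 0 < κ) (hδ : 0 < δ) (hσ : 0 < σ)
    (hcost : δ + σ < κ) (hκf : κ < B.f' 0)
    (β : ℝ) (hβ : β = (1 / (N:ℝ)) * κ + (((N:ℝ) - 1) / (N:ℝ)) * (δ + σ))
    (x y : Fin N → ℝ) (Z : Fin N → Fin N → ℝ) (hfeas : Feasible x y Z) :
    ((∀ x' y' : Fin N → ℝ, ∀ Z' : Fin N → Fin N → ℝ, Feasible x' y' Z' →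
        SW B κ δ σ x' Z' ≤ SW B κ δ σ x Z)
      ↔ ((∑ i, x i) = B.xhat β ∧ ∀ i, x i = y i ∧ ∀ j, j ≠ i → Z j i = x i))
    ∧ ((∀ x' y' : Fin N → ℝ, ∀ Z' : Fin N → Fin N → ℝ, Feasible x' y' Z' →
        SW B κ δ σ x' Z' ≤ SW B κ δ σ x Z)
      → SW B κ δ σ x Z = (N:ℝ) * B.fstar β) := by
  have hN2 : (2:ℝ) ≤ (N:ℝ) := by exact_mod_cast hN
  have hNpos : (0:ℝ) < (N:ℝ) := by linarith
  have hN0 : (N:ℝ) ≠ 0 := ne_of_gt hNpos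
  have hγpos : 0 < κ - δ - σ := by linarith
  have hβκ : β < κ := by
    have h1 : κ - β = (((N:ℝ)-1)/(N:ℝ)) * (κ - δ - σ) := by rw [hβ]; field_simp; ring
    have h2 : 0 < (((N:ℝ)-1)/(N:ℝ)) * (κ - δ - σ) :=
      mul_pos (div_pos (by linarith) hNpos) hγpos
    linarith
  have hβpos : 0 < β := by
    rw [hβ]
    have h1 : 0 < 1/(N:ℝ) * κ := by positivity
    have h2 : 0 ≤ ((N:ℝ)-1)/(N:ℝ) * (δ+σ) :=
      mul_nonneg (div_nonneg (by linarith) hNpos.le) (by linarith)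
    linarith
  have hβf' : β < B.f' 0 := hβκ.trans hκf
  have hβf'le : β ≤ B.f' 0 := hβf'.le
  have hw0 : 0 ≤ B.xhat β := B.xhat_nonneg β hβpos hβf'le
  have hmax := B.xhat_max β hβpos hβf'le
  have hstrict := aux_strict B β hβpos hβf'
  have hfstar : B.fstar β = B.f (B.xhat β) - β * B.xhat β := rfl
  -- the main bound / characterization for an arbitrary feasible allocation
  have main : ∀ (x' y' : Fin N → ℝ) (Z' : Fin N → Fin N → ℝ), Feasible x' y' Z' →
      SW B κ δ σ x' Z' ≤ (N:ℝ) * B.fstar β ∧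
      (SW B κ δ σ x' Z' = (N:ℝ) * B.fstar β ↔
        ((∑ i, x' i) = B.xhat β ∧ ∀ i, x' i = y' i ∧ ∀ j, j ≠ i → Z' j i = x' i)) := by
    intro x' y' Z' hf
    have hZnn : ∀ i j, 0 ≤ Z' i j := by
      intro i j; rcases eq_or_ne j i with h|h
      · rw [h]; exact le_of_eq (hf i).2.2.2.1.symm
      · exact ((hf i).2.2.2.2 j h).1
    have hZle_ite : ∀ i j, Z' i j + (if j = i then x' i else 0) ≤ x' j := by
      intro i j; rcases eq_or_ne j i with h|h
      · subst h; simp [(hf j).2.2.2.1]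
      · have h2 := ((hf i).2.2.2.2 j h).2
        have h3 := (hf j).2.2.1
        simp [h]; linarith
    have hc_eq : ∀ i, x' i + (∑ j, Z' i j) = ∑ j, (Z' i j + if j = i then x' i else 0) := by
      intro i
      rw [Finset.sum_add_distrib, Finset.sum_ite_eq']
      simp [add_comm]
    set T := ∑ j, x' j with hT
    have hcle : ∀ i, x' i + (∑ j, Z' i j) ≤ T := by
      intro i; rw [hc_eq i, hT]; exact Finset.sum_le_sum (fun j _ => hZle_ite i j)
    have hcnn : ∀ i, 0 ≤ x' i + (∑ j, Z' i j) :=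
      fun i => add_nonneg (hf i).1 (Finset.sum_nonneg fun j _ => hZnn i j)
    have hkey : SW B κ δ σ x' Z' = ∑ i, ((B.f (x' i + ∑ j, Z' i j) - β * (x' i + ∑ j, Z' i j))
        + (κ-δ-σ)/(N:ℝ) * (x' i + ∑ j, Z' i j) - (κ-δ-σ)/(N:ℝ) * T) := by
      have hpt : ∀ i : Fin N,
          B.f (x' i + ∑ j, Z' i j) - κ * x' i - δ * (∑ j, Z' i j) - σ * (∑ j, Z' j i)
          = ((B.f (x' i + ∑ j, Z' i j) - β * (x' i + ∑ j, Z' i j))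
              + (κ-δ-σ)/(N:ℝ) * (x' i + ∑ j, Z' i j) - (κ-δ-σ)/(N:ℝ) * T)
            + (σ * ((∑ j, Z' i j) - (∑ j, Z' j i)) + (κ-δ-σ) * (T/(N:ℝ) - x' i)) := by
        intro i; rw [hβ]; field_simp; ring
      show (∑ i, (B.f (x' i + ∑ j, Z' i j) - κ * x' i - δ * (∑ j, Z' i j) - σ * (∑ j, Z' j i))) = _
      rw [Finset.sum_congr rfl (fun i _ => hpt i), Finset.sum_add_distrib]
      have hz : ∑ i, (σ * ((∑ j, Z' i j) - (∑ j, Z' j i)) + (κ-δ-σ) * (T/(N:ℝ) - x' i)) = 0 := by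
        rw [Finset.sum_add_distrib, ← Finset.mul_sum, ← Finset.mul_sum,
          Finset.sum_sub_distrib, Finset.sum_sub_distrib]
        have e1 : (∑ i : Fin N, ∑ j, Z' j i) = ∑ i, ∑ j, Z' i j := Finset.sum_comm
        have e2 : (∑ _i : Fin N, T/(N:ℝ)) = T := by
          rw [Finset.sum_const, Finset.card_univ, Fintype.card_fin, nsmul_eq_mul]
          field_simp
        rw [e1, e2, ← hT]
        simp
      rw [hz, add_zero]
    have hNsum : (N:ℝ) * B.fstar β = ∑ _i : Fin N, B.fstar β := by
      rw [Finset.sum_const, Finset.card_univ, Fintype.card_fin, nsmul_eq_mul]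
    have hNf : (N:ℝ) * B.fstar β - SW B κ δ σ x' Z'
        = ∑ i, ((B.fstar β - (B.f (x' i + ∑ j, Z' i j) - β * (x' i + ∑ j, Z' i j)))
            + (κ-δ-σ)/(N:ℝ) * (T - (x' i + ∑ j, Z' i j))) := by
      rw [hkey, hNsum, ← Finset.sum_sub_distrib]
      apply Finset.sum_congr rfl; intro i _; ring
    have htermnn : ∀ i ∈ Finset.univ,
        0 ≤ (B.fstar β - (B.f (x' i + ∑ j, Z' i j) - β * (x' i + ∑ j, Z' i j)))
            + (κ-δ-σ)/(N:ℝ) * (T - (x' i + ∑ j, Z' i j)) := by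
      intro i _
      have h1 := hmax _ (hcnn i)
      have h2 : 0 ≤ (κ-δ-σ)/(N:ℝ) * (T - (x' i + ∑ j, Z' i j)) :=
        mul_nonneg (by positivity) (by linarith [hcle i])
      rw [hfstar]; linarith
    have hsumnn := Finset.sum_nonneg htermnn
    constructor
    · linarith [hNf, hsumnn]
    constructor
    · intro heq
      have hz0 : ∀ i ∈ Finset.univ,
          (B.fstar β - (B.f (x' i + ∑ j, Z' i j) - β * (x' i + ∑ j, Z' i j)))
            + (κ-δ-σ)/(N:ℝ) * (T - (x' i + ∑ j, Z' i j)) = 0 :=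
        (Finset.sum_eq_zero_iff_of_nonneg htermnn).mp (by rw [← hNf, heq]; ring)
      have hceq : ∀ i, x' i + ∑ j, Z' i j = B.xhat β ∧ x' i + ∑ j, Z' i j = T := by
        intro i
        have h0 := hz0 i (Finset.mem_univ i)
        have h1 := hmax _ (hcnn i)
        have h2 : 0 ≤ (κ-δ-σ)/(N:ℝ) * (T - (x' i + ∑ j, Z' i j)) :=
          mul_nonneg (by positivity) (by linarith [hcle i])
        have h3 : B.fstar β - (B.f (x' i + ∑ j, Z' i j) - β * (x' i + ∑ j, Z' i j)) = 0 := by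
          rw [hfstar] at h0 ⊢; linarith
        have h4 : (κ-δ-σ)/(N:ℝ) * (T - (x' i + ∑ j, Z' i j)) = 0 := by linarith
        have h5 : x' i + ∑ j, Z' i j = T := by
          rcases mul_eq_zero.mp h4 with h | h
          · exact absurd h (ne_of_gt (by positivity))
          · linarith [sub_eq_zero.mp h]
        have h6 : x' i + ∑ j, Z' i j = B.xhat β := by
          by_contra hne
          have := hstrict _ (hcnn i) hne
          rw [hfstar] at h3; linarith
        exact ⟨h6, h5⟩
      have hTx : T = B.xhat β := by
        have h := hceq ⟨0, by omega⟩
        linarith [h.1, h.2]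
      refine ⟨hTx, ?_⟩
      have hZeq : ∀ i j, j ≠ i → Z' i j = x' j := by
        intro i j hji
        have hsum : (∑ j', (Z' i j' + if j' = i then x' i else 0)) = ∑ j', x' j' := by
          rw [← hc_eq i, (hceq i).2, hT]
        have hzero : (∑ j', (x' j' - (Z' i j' + if j' = i then x' i else 0))) = 0 := by
          rw [Finset.sum_sub_distrib, hsum, sub_self]
        have hnn : ∀ j' ∈ Finset.univ,
            0 ≤ x' j' - (Z' i j' + if j' = i then x' i else 0) :=
          fun j' _ => by linarith [hZle_ite i j']
        have h := (Finset.sum_eq_zero_iff_of_nonneg hnn).mp hzero j (Finset.mem_univ j)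
        simp [hji] at h
        linarith
      intro i
      haveI : Nontrivial (Fin N) := Fin.nontrivial_iff_two_le.mpr hN
      obtain ⟨j, hj⟩ := exists_ne i
      constructor
      · have h1 := hZeq j i (Ne.symm hj)
        have h2 := ((hf j).2.2.2.2 i (Ne.symm hj)).2
        have h3 := (hf i).2.2.1
        linarith
      · intro j' hj'
        exact hZeq j' i (Ne.symm hj')
    · rintro ⟨hsum, hcond⟩
      have hd : ∀ i, (∑ j, Z' i j) = T - x' i := by
        intro i
        have hptw : ∀ j, Z' i j = x' j - (if j = i then x' j else 0) := by
          intro j; rcases eq_or_ne j i with h|h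
          · subst h; simp [(hf j).2.2.2.1]
          · rw [(hcond j).2 i (Ne.symm h)]; simp [h]
        rw [Finset.sum_congr rfl (fun j _ => hptw j), Finset.sum_sub_distrib,
          Finset.sum_ite_eq', ← hT]
        simp
      have hcT : ∀ i, x' i + ∑ j, Z' i j = T := by intro i; rw [hd i]; ring
      rw [hkey]
      have hlast : ∀ i ∈ Finset.univ,
          ((B.f (x' i + ∑ j, Z' i j) - β * (x' i + ∑ j, Z' i j))
            + (κ-δ-σ)/(N:ℝ) * (x' i + ∑ j, Z' i j) - (κ-δ-σ)/(N:ℝ) * T) = B.fstar β := by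
        intro i _
        rw [hcT i, hsum, hfstar]; ring
      rw [Finset.sum_congr rfl hlast, Finset.sum_const, Finset.card_univ, Fintype.card_fin,
        nsmul_eq_mul]
  -- the optimal allocation
  have hxs0 : 0 ≤ B.xhat β / (N:ℝ) := div_nonneg hw0 hNpos.le
  have hfs : Feasible (fun _ : Fin N => B.xhat β / (N:ℝ)) (fun _ : Fin N => B.xhat β / (N:ℝ))
      (fun i j : Fin N => if j = i then 0 else B.xhat β / (N:ℝ)) := by
    intro i
    refine ⟨hxs0, hxs0, le_rfl, by simp, ?_⟩
    intro j hj
    constructor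
    · simpa [hj] using hxs0
    · simp [hj]
  have hconds : (∑ _i : Fin N, B.xhat β / (N:ℝ)) = B.xhat β ∧
      ∀ i : Fin N, B.xhat β / (N:ℝ) = B.xhat β / (N:ℝ) ∧
        ∀ j, j ≠ i → (if i = j then 0 else B.xhat β / (N:ℝ)) = B.xhat β / (N:ℝ) := by
    constructor
    · rw [Finset.sum_const, Finset.card_univ, Fintype.card_fin, nsmul_eq_mul]
      field_simp
    · intro i
      exact ⟨rfl, fun j hj => by simp [Ne.symm hj]⟩
  have hSWs : SW B κ δ σ (fun _ : Fin N => B.xhat β / (N:ℝ))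
      (fun i j : Fin N => if j = i then 0 else B.xhat β / (N:ℝ)) = (N:ℝ) * B.fstar β :=
    (main _ _ _ hfs).2.mpr hconds
  have hopt_eq : (∀ x' y' : Fin N → ℝ, ∀ Z' : Fin N → Fin N → ℝ, Feasible x' y' Z' →
      SW B κ δ σ x' Z' ≤ SW B κ δ σ x Z) → SW B κ δ σ x Z = (N:ℝ) * B.fstar β := by
    intro hopt
    have h1 := hopt _ _ _ hfs
    have h2 := (main x y Z hfeas).1
    rw [hSWs] at h1
    linarith
  refine ⟨⟨fun hopt => (main x y Z hfeas).2.mp (hopt_eq hopt), ?_⟩, hopt_eq⟩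
  intro hcond x' y' Z' hf'
  have h1 := (main x y Z hfeas).2.mpr hcond
  have h2 := (main x' y' Z' hf').1
  linarith
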